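/- The burning number of the cycle C_n on n vertices equals ⌈√n⌉. -/

import Mathlib

open SimpleGraph
open scoped Classical

/-- Burning number: least `k` such that there are fire sources `v₀,…,v_{k-1}` with
`⋃_{r=0}^{k-1} B_r(v_r) = V`. -/
noncomputable def burningNumber (V : Type*) [Fintype V] (G : SimpleGraph V) : ℕ :=
  sInf {k | ∃ v : Fin k → V, ∀ u : V, ∃ r : Fin k, G.dist (v r) u ≤ (r : ℕ)}

/-- Covering number `b̂`: least `k` such that `k` balls of radius `k` cover `V`. -/
noncomputable def coverNumber (V : Type*) [Fintype V] (G : SimpleGraph V) : ℕ :=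
  sInf {k | ∃ v : Fin k → V, ∀ u : V, ∃ i : Fin k, G.dist (v i) u ≤ k}

section CycleAux
open Fin.NatCast Fin.CommRing
variable {n : ℕ} [NeZero n]

lemma fin_one_val (hn : 2 ≤ n) : (1 : Fin n).val = 1 := by
  rw [Fin.val_one']
  exact Nat.mod_eq_of_lt (by omega)

lemma fin_neg_val {a : Fin n} (ha : a ≠ 0) : (-a).val = n - a.val := by
  rw [Fin.coe_neg]
  have h1 : a.val ≠ 0 := by intro h; exact ha (Fin.ext (by rw [h]; simp))
  have h2 : a.val < n := a.isLt
  rw [Nat.mod_eq_of_lt (by omega)]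

lemma step_lemma (hn : 2 ≤ n) (a : Fin n) :
    min a.val (-a).val ≤ min (a - 1).val (-(a - 1)).val + 1 := by
  by_cases h0 : a = 0
  · subst h0; simp
  · obtain ⟨m, rfl⟩ : ∃ m, n = m + 1 := ⟨n - 1, by omega⟩
    have h1 : (a - 1).val = a.val - 1 := by rw [Fin.coe_sub_one, if_neg h0]
    have hv0 : a.val ≠ 0 := by intro h; exact h0 (Fin.ext (by rw [h]; simp))
    by_cases h1' : a = 1
    · subst h1'
      have e : (1 : Fin (m+1)) - 1 = 0 := sub_self 1
      rw [e, fin_one_val hn]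
      simp
    · have ha1 : a - 1 ≠ 0 := by
        intro h; exact h1' (by rwa [sub_eq_zero] at h)
      have h2 : (-a).val = (m+1) - a.val := fin_neg_val h0
      have h3 : (-(a - 1)).val = (m+1) - (a - 1).val := fin_neg_val ha1
      have h4 : a.val < m + 1 := a.isLt
      have h5 : a.val ≠ 1 := by
        intro h; exact h1' (Fin.ext (by rw [h, fin_one_val hn]))
      rw [h1, h2, h3, h1]
      omega

lemma walk_bound (hn : 2 ≤ n) {u v : Fin n} (p : (cycleGraph n).Walk u v) :
    min (v - u).val (u - v).val ≤ p.length := by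
  induction p with
  | nil => simp
  | @cons u w v h q ih =>
    rw [Walk.length_cons]
    rw [cycleGraph_adj'] at h
    rcases h with h | h
    · -- (u - w).val = 1, w = u - 1
      have hw : w = u - 1 := by
        have e : u - w = 1 := Fin.ext (by rw [h, fin_one_val hn])
        rw [← e]; ring
      have key := step_lemma hn (u - v)
      have e1 : u - v - 1 = w - v := by rw [hw]; ring
      have e2 : -(u - v - 1) = v - w := by rw [hw]; ring
      have e3 : -(u - v) = v - u := by ring
      rw [e2, e1, e3] at key
      calc min (v - u).val (u - v).val = min (u - v).val (v - u).val := min_comm _ _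
        _ ≤ min (w - v).val (v - w).val + 1 := key
        _ = min (v - w).val (w - v).val + 1 := by rw [min_comm]
        _ ≤ q.length + 1 := by omega
    · -- (w - u).val = 1, w = u + 1
      have hw : w = u + 1 := by
        have e : w - u = 1 := Fin.ext (by rw [h, fin_one_val hn])
        rw [← e]; ring
      have key := step_lemma hn (v - u)
      have e1 : v - u - 1 = v - w := by rw [hw]; ring
      have e2 : -(v - u - 1) = w - v := by rw [hw]; ring
      have e3 : -(v - u) = u - v := by ring
      rw [e2, e1, e3] at key
      exact key.trans (by omega)

lemma cycle_connected (hn : 2 ≤ n) : (cycleGraph n).Connected := by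
  obtain ⟨m, rfl⟩ : ∃ m, n = m + 1 := ⟨n - 1, by omega⟩
  exact cycleGraph_connected

lemma dist_add_nat (hn : 2 ≤ n) (u : Fin n) (m : ℕ) :
    (cycleGraph n).dist u (u + (m : Fin n)) ≤ m := by
  induction m with
  | zero => simp
  | succ m ih =>
    have hadj : (cycleGraph n).Adj (u + (m : Fin n)) (u + ((m + 1 : ℕ) : Fin n)) := by
      rw [cycleGraph_adj']
      right
      have e : (u + ((m + 1 : ℕ) : Fin n)) - (u + (m : Fin n)) = 1 := by push_cast; ring
      rw [e, fin_one_val hn]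
    have hd : (cycleGraph n).dist (u + (m : Fin n)) (u + ((m + 1 : ℕ) : Fin n)) ≤ 1 := by
      have := SimpleGraph.dist_le hadj.toWalk
      simpa using this
    have tri := (cycle_connected hn).dist_triangle
      (u := u) (v := u + (m : Fin n)) (w := u + ((m + 1 : ℕ) : Fin n))
    omega

lemma cycle_dist_le (hn : 2 ≤ n) (u v : Fin n) :
    (cycleGraph n).dist u v ≤ min (v - u).val (u - v).val := by
  apply le_min
  · have h := dist_add_nat hn u (v - u).val
    rwa [Fin.cast_val_eq_self, add_sub_cancel] at h
  · have h := dist_add_nat hn v (u - v).val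
    rw [Fin.cast_val_eq_self, add_sub_cancel] at h
    rwa [SimpleGraph.dist_comm] at h

lemma cycle_dist_ge (hn : 2 ≤ n) (u v : Fin n) :
    min (v - u).val (u - v).val ≤ (cycleGraph n).dist u v := by
  obtain ⟨p, hp⟩ := (cycle_connected hn).exists_walk_length_eq_dist u v
  exact (walk_bound hn p).trans hp.le

lemma ball_card (hn : 2 ≤ n) (c : Fin n) (r : ℕ) :
    (Finset.univ.filter (fun u => (cycleGraph n).dist c u ≤ r)).card ≤ 2 * r + 1 := by
  have hsub : (Finset.univ.filter (fun u => (cycleGraph n).dist c u ≤ r)) ⊆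
      (Finset.range (2 * r + 1)).image (fun j => c - ((r : ℕ) : Fin n) + ((j : ℕ) : Fin n)) := by
    intro u hu
    rw [Finset.mem_filter] at hu
    have hm := (cycle_dist_ge hn c u).trans hu.2
    rw [Finset.mem_image]
    rcases le_or_gt (u - c).val (c - u).val with hcase | hcase
    · have hd : (u - c).val ≤ r := by omega
      refine ⟨r + (u - c).val, Finset.mem_range.mpr (by omega), ?_⟩
      push_cast
      ring
    · have hd : (c - u).val ≤ r := by omega
      refine ⟨r - (c - u).val, Finset.mem_range.mpr (by omega), ?_⟩
      rw [Nat.cast_sub hd, Fin.cast_val_eq_self]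
      ring
  calc _ ≤ ((Finset.range (2 * r + 1)).image _).card := Finset.card_le_card hsub
    _ ≤ (Finset.range (2 * r + 1)).card := Finset.card_image_le
    _ = 2 * r + 1 := Finset.card_range _

lemma sum_odd (k : ℕ) : ∑ r ∈ Finset.range k, (2 * r + 1) = k ^ 2 := by
  induction k with
  | zero => simp
  | succ k ih => rw [Finset.sum_range_succ, ih]; ring

lemma member_lb (hn : 2 ≤ n) {k : ℕ}
    (hk : ∃ v : Fin k → Fin n, ∀ u : Fin n, ∃ r : Fin k, (cycleGraph n).dist (v r) u ≤ (r : ℕ)) :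
    n ≤ k ^ 2 := by
  obtain ⟨v, hv⟩ := hk
  have cover : (Finset.univ : Finset (Fin n)) ⊆
      Finset.univ.biUnion (fun r : Fin k =>
        Finset.univ.filter (fun u => (cycleGraph n).dist (v r) u ≤ (r : ℕ))) := by
    intro u _
    obtain ⟨r, hr⟩ := hv u
    exact Finset.mem_biUnion.mpr ⟨r, Finset.mem_univ r, Finset.mem_filter.mpr ⟨Finset.mem_univ u, hr⟩⟩
  have hcard : (Finset.univ : Finset (Fin n)).card = n := by simp
  calc n = (Finset.univ : Finset (Fin n)).card := hcard.symm
    _ ≤ _ := Finset.card_le_card cover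
    _ ≤ ∑ r : Fin k, (Finset.univ.filter
          (fun u => (cycleGraph n).dist (v r) u ≤ (r : ℕ))).card := Finset.card_biUnion_le
    _ ≤ ∑ r : Fin k, (2 * (r : ℕ) + 1) := Finset.sum_le_sum (fun r _ => ball_card hn (v r) r)
    _ = ∑ r ∈ Finset.range k, (2 * r + 1) := Fin.sum_univ_eq_sum_range (fun r => 2 * r + 1) k
    _ = k ^ 2 := sum_odd k

lemma construction {n : ℕ} [NeZero n] (hn : 2 ≤ n) {k : ℕ} (hk : n ≤ k ^ 2) :
    ∃ v : Fin k → Fin n, ∀ u : Fin n, ∃ r : Fin k, (cycleGraph n).dist (v r) u ≤ (r : ℕ) := by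
  refine ⟨fun r => (((r : ℕ) ^ 2 + (r : ℕ) : ℕ) : Fin n), fun u => ?_⟩
  set s := Nat.sqrt u.val with hs
  have hsk : s < k := by
    have h1 : u.val < k ^ 2 := lt_of_lt_of_le u.isLt hk
    exact Nat.sqrt_lt'.mpr h1
  refine ⟨⟨s, hsk⟩, ?_⟩
  have h1 : s ^ 2 ≤ u.val := Nat.sqrt_le' u.val
  have h2 : u.val < (s + 1) ^ 2 := Nat.lt_succ_sqrt' u.val
  simp only []
  set c : Fin n := ((s ^ 2 + s : ℕ) : Fin n) with hc
  have hdle := cycle_dist_le hn c u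
  rcases le_or_gt (s ^ 2 + s) u.val with hcase | hcase
  · have e : u - c = ((u.val - (s ^ 2 + s) : ℕ) : Fin n) := by
      rw [Nat.cast_sub hcase, Fin.cast_val_eq_self]
    have : (u - c).val ≤ s := by
      rw [e, Fin.val_natCast]
      have := Nat.mod_le (u.val - (s ^ 2 + s)) n
      have hub : u.val - (s ^ 2 + s) ≤ s := by
        rw [Nat.sub_le_iff_le_add]; nlinarith [h2]
      omega
    calc (cycleGraph n).dist c u ≤ _ := hdle
      _ ≤ (u - c).val := min_le_left _ _
      _ ≤ s := this
  · have hle : u.val ≤ s ^ 2 + s := le_of_lt hcase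
    have e : c - u = ((s ^ 2 + s - u.val : ℕ) : Fin n) := by
      conv_lhs => rw [← Fin.cast_val_eq_self u]
      rw [← Nat.cast_sub hle]
    have : (c - u).val ≤ s := by
      rw [e, Fin.val_natCast]
      have := Nat.mod_le (s ^ 2 + s - u.val) n
      have hub : s ^ 2 + s - u.val ≤ s := by
        rw [Nat.sub_le_iff_le_add]; linarith [h1]
      omega
    calc (cycleGraph n).dist c u ≤ _ := hdle
      _ ≤ (c - u).val := min_le_right _ _
      _ ≤ s := this

theorem burning_cycle (n : ℕ) (hn : 3 ≤ n) :
    burningNumber (Fin n) (SimpleGraph.cycleGraph n) = ⌈Real.sqrt n⌉₊ := by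
  haveI : NeZero n := ⟨by omega⟩
  have hn2 : 2 ≤ n := by omega
  set k := ⌈Real.sqrt n⌉₊ with hkdef
  have hnk : n ≤ k ^ 2 := by
    have h1 : Real.sqrt n ≤ (k : ℝ) := Nat.le_ceil _
    have h2 : (n : ℝ) ≤ (k : ℝ) ^ 2 := by
      have := Real.sq_sqrt (by positivity : (0:ℝ) ≤ (n:ℝ))
      nlinarith [Real.sqrt_nonneg (n : ℝ)]
    exact_mod_cast h2
  have hmem : k ∈ {m | ∃ v : Fin m → Fin n,
      ∀ u : Fin n, ∃ r : Fin m, (cycleGraph n).dist (v r) u ≤ (r : ℕ)} :=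
    construction hn2 hnk
  apply le_antisymm
  · exact Nat.sInf_le hmem
  · apply le_csInf ⟨k, hmem⟩
    intro m hm
    have hle : n ≤ m ^ 2 := member_lb hn2 hm
    rw [hkdef, Nat.ceil_le]
    calc Real.sqrt n ≤ Real.sqrt ((m : ℝ) ^ 2) := Real.sqrt_le_sqrt (by exact_mod_cast hle)
      _ = (m : ℝ) := by rw [Real.sqrt_sq (by positivity)]
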